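/- Let \pi: \mathbb{Z}^d \times \mathbb{Z}^d \to \mathbb{R} be finitely supported with \sum_y \pi(x,y)=0 for all x, with \pi(x,y)=0 unless |y-x| \le L and |x| \le L(m-1), for some positive integer m and real L \ge 1. Define \hat\pi(k) = \sum_{x,y} e^{ik\cdot y}\pi(x,y). Then for all k \in \mathbb{R}^d, |\hat\pi(k) - k \cdot \nabla\hat\pi(0)| \le |k|^2 m L^2 \sum_{x,y} |\pi(x,y)|, where \nabla\hat\pi(0) = i\sum_{x,y} y\, \pi(x,y). -/

import Mathlib

open Finset



lemma aux_exp_sub_one_le (t : ℝ) :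
    ‖Complex.exp (Complex.I * t) - 1‖ ≤ |t| := by
  have h1 : Complex.normSq (Complex.exp (Complex.I * t) - 1) = 2 - 2 * Real.cos t := by
    rw [mul_comm, Complex.exp_mul_I]
    simp [Complex.normSq_apply, Complex.cos_ofReal_re, Complex.sin_ofReal_re,
      Complex.add_re, Complex.add_im]
    nlinarith [Real.sin_sq_add_cos_sq t]
  rw [Complex.norm_def, h1]
  rw [show |t| = Real.sqrt (t ^ 2) by rw [Real.sqrt_sq_eq_abs]]
  apply Real.sqrt_le_sqrt
  nlinarith [Real.one_sub_sq_div_two_le_cos (x := t)]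

lemma aux_exp_taylor_nonneg {t : ℝ} (ht : 0 ≤ t) :
    ‖Complex.exp (Complex.I * t) - 1 - Complex.I * t‖ ≤ t ^ 2 / 2 := by
  set f : ℝ → ℂ := fun u => Complex.exp (Complex.I * u) - 1 - Complex.I * u with hf
  have hderiv : ∀ u : ℝ, HasDerivAt f (Complex.I * (Complex.exp (Complex.I * u) - 1)) u := by
    intro u
    have h0 : HasDerivAt (fun u : ℝ => (u : ℂ)) 1 u := Complex.ofRealCLM.hasDerivAt
    have h1 : HasDerivAt (fun u : ℝ => Complex.I * u) Complex.I u := by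
      simpa using h0.const_mul Complex.I
    have h2 : HasDerivAt (fun u : ℝ => Complex.exp (Complex.I * u))
        (Complex.exp (Complex.I * u) * Complex.I) u := h1.cexp
    have := (h2.sub_const 1).sub h1
    exact this.congr_deriv (by ring)
  have key := image_norm_le_of_norm_deriv_right_le_deriv_boundary
    (f := f) (f' := fun u => Complex.I * (Complex.exp (Complex.I * u) - 1))
    (a := 0) (b := t) (B := fun u => u ^ 2 / 2) (B' := fun u => u)
    (fun u _ => (hderiv u).continuousAt.continuousWithinAt)
    (fun u _ => (hderiv u).hasDerivWithinAt)
    (by simp [hf]) (fun u => by simpa using (hasDerivAt_pow 2 u).div_const 2)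
    (fun u hu => by
      have := aux_exp_sub_one_le u
      simp only [norm_mul, Complex.norm_I, one_mul]
      calc ‖Complex.exp (Complex.I * u) - 1‖ ≤ |u| := this
        _ = u := abs_of_nonneg hu.1)
  have := key (Set.right_mem_Icc.mpr ht)
  simpa [hf] using this

lemma aux_exp_taylor (t : ℝ) :
    ‖Complex.exp (Complex.I * t) - 1 - Complex.I * t‖ ≤ t ^ 2 / 2 := by
  rcases le_total 0 t with ht | ht
  · exact aux_exp_taylor_nonneg ht
  · have h := aux_exp_taylor_nonneg (t := -t) (by linarith)
    have hconj : Complex.exp (Complex.I * (-t : ℝ)) - 1 - Complex.I * (-t : ℝ)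
        = (starRingEnd ℂ) (Complex.exp (Complex.I * t) - 1 - Complex.I * t) := by
      rw [map_sub, map_sub, ← Complex.exp_conj]
      push_cast
      simp [Complex.conj_I, mul_comm]
    rw [hconj, Complex.norm_conj] at h
    calc ‖_‖ ≤ (-t) ^ 2 / 2 := h
      _ = t ^ 2 / 2 := by ring

lemma aux_rowsum_zero {d : ℕ} (π : (Fin d → ℤ) → (Fin d → ℤ) → ℝ)
    (S : Finset ((Fin d → ℤ) × (Fin d → ℤ)))
    (hrow : ∀ x : Fin d → ℤ, ∑ p ∈ S.filter (fun p => p.1 = x), π p.1 p.2 = 0)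
    (h : (Fin d → ℤ) → ℂ) :
    ∑ p ∈ S, h p.1 * (π p.1 p.2 : ℂ) = 0 := by
  rw [← Finset.sum_fiberwise_of_maps_to (g := Prod.fst) (t := S.image Prod.fst)
      (fun p hp => Finset.mem_image_of_mem Prod.fst hp)]
  refine Finset.sum_eq_zero fun x _ => ?_
  have heq : ∑ p ∈ S.filter (fun p => p.1 = x), h p.1 * (π p.1 p.2 : ℂ)
      = h x * ∑ p ∈ S.filter (fun p => p.1 = x), (π p.1 p.2 : ℂ) := by
    rw [Finset.mul_sum]
    exact Finset.sum_congr rfl fun p hp => by rw [(Finset.mem_filter.mp hp).2]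
  have h0 : ∑ p ∈ S.filter (fun p => p.1 = x), (π p.1 p.2 : ℂ) = 0 := by
    rw [← Complex.ofReal_sum, hrow x, Complex.ofReal_zero]
  rw [heq, h0, mul_zero]

lemma aux_cs {d : ℕ} (k : EuclideanSpace ℝ (Fin d)) (v : Fin d → ℝ) :
    |∑ i, k i * v i| ≤ ‖k‖ * Real.sqrt (∑ i, v i ^ 2) := by
  have h1 : (∑ i, k i * v i) ^ 2 ≤ (∑ i, k i ^ 2) * (∑ i, v i ^ 2) :=
    Finset.sum_mul_sq_le_sq_mul_sq Finset.univ k v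
  have hk : ‖k‖ = Real.sqrt (∑ i, k i ^ 2) := by
    rw [EuclideanSpace.norm_eq]
    congr 1
    exact Finset.sum_congr rfl fun i _ => by rw [Real.norm_eq_abs, sq_abs]
  rw [hk, ← Real.sqrt_mul (Finset.sum_nonneg fun i _ => sq_nonneg _),
    ← Real.sqrt_sq_eq_abs]
  exact Real.sqrt_le_sqrt h1


open Finset in
theorem fourier_transform_first_order_taylor_bound {d : ℕ} (L : ℝ) (hL : 1 ≤ L)
    (m : ℕ) (hm : 0 < m)
    (π : (Fin d → ℤ) → (Fin d → ℤ) → ℝ)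
    (S : Finset ((Fin d → ℤ) × (Fin d → ℤ)))
    (hsupp : ∀ x y, π x y ≠ 0 → (x, y) ∈ S)
    (hrow : ∀ x : Fin d → ℤ, ∑ p ∈ S.filter (fun p => p.1 = x), π p.1 p.2 = 0)
    (hrange : ∀ x y : Fin d → ℤ, π x y ≠ 0 →
      Real.sqrt (∑ i, ((y i : ℝ) - (x i : ℝ)) ^ 2) ≤ L ∧
      Real.sqrt (∑ i, ((x i : ℝ)) ^ 2) ≤ L * ((m : ℝ) - 1))
    (k : EuclideanSpace ℝ (Fin d)) :
    ‖(∑ p ∈ S,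
            Complex.exp (Complex.I * ((∑ i, k i * (p.2 i : ℝ) : ℝ) : ℂ)) * (π p.1 p.2 : ℂ)) -
          Complex.I * ∑ p ∈ S, ((∑ i, k i * (p.2 i : ℝ) : ℝ) : ℂ) * (π p.1 p.2 : ℂ)‖ ≤
      ‖k‖ ^ 2 * m * L ^ 2 * ∑ p ∈ S, |π p.1 p.2| := by
  set K := ‖k‖ with hK
  have hK0 : 0 ≤ K := norm_nonneg k
  set u : ((Fin d → ℤ) × (Fin d → ℤ)) → ℝ := fun p => ∑ i, k i * (p.2 i : ℝ) with hu
  set s : (Fin d → ℤ) → ℝ := fun x => ∑ i, k i * (x i : ℝ) with hs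
  set tt : ((Fin d → ℤ) × (Fin d → ℤ)) → ℝ :=
    fun p => ∑ i, k i * ((p.2 i : ℝ) - (p.1 i : ℝ)) with htt
  set g : ((Fin d → ℤ) × (Fin d → ℤ)) → ℂ := fun p =>
    Complex.exp (Complex.I * (s p.1 : ℝ)) * (Complex.exp (Complex.I * (tt p : ℝ)) - 1) -
      Complex.I * (tt p : ℝ) with hg
  have hsum : ∀ p : ((Fin d → ℤ) × (Fin d → ℤ)), u p = s p.1 + tt p := by
    intro p
    rw [hu, hs, htt, ← Finset.sum_add_distrib]
    exact Finset.sum_congr rfl fun i _ => by ring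
  have hE : (∑ p ∈ S, Complex.exp (Complex.I * (u p : ℂ)) * (π p.1 p.2 : ℂ)) -
      Complex.I * ∑ p ∈ S, ((u p : ℝ) : ℂ) * (π p.1 p.2 : ℂ)
      = ∑ p ∈ S, g p * (π p.1 p.2 : ℂ) := by
    rw [Finset.mul_sum, ← Finset.sum_sub_distrib]
    have hz := aux_rowsum_zero π S hrow
      (fun x => Complex.exp (Complex.I * (s x : ℝ)) - Complex.I * (s x : ℝ))
    calc ∑ p ∈ S, (Complex.exp (Complex.I * (u p : ℂ)) * (π p.1 p.2 : ℂ) -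
          Complex.I * (((u p : ℝ) : ℂ) * (π p.1 p.2 : ℂ)))
        = ∑ p ∈ S, (g p * (π p.1 p.2 : ℂ) +
            (fun x => Complex.exp (Complex.I * (s x : ℝ)) - Complex.I * (s x : ℝ)) p.1 *
              (π p.1 p.2 : ℂ)) := by
          refine Finset.sum_congr rfl fun p _ => ?_
          have h1 : ((u p : ℝ) : ℂ) = ((s p.1 : ℝ) : ℂ) + ((tt p : ℝ) : ℂ) := by
            rw [hsum p]; push_cast; ring
          rw [hg, h1, mul_add, Complex.exp_add]
          ring
      _ = (∑ p ∈ S, g p * (π p.1 p.2 : ℂ)) +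
            ∑ p ∈ S, (fun x => Complex.exp (Complex.I * (s x : ℝ)) - Complex.I * (s x : ℝ)) p.1 *
              (π p.1 p.2 : ℂ) := Finset.sum_add_distrib
      _ = ∑ p ∈ S, g p * (π p.1 p.2 : ℂ) := by rw [hz, add_zero]
  rw [hE]
  calc ‖∑ p ∈ S, g p * (π p.1 p.2 : ℂ)‖
      ≤ ∑ p ∈ S, ‖g p * (π p.1 p.2 : ℂ)‖ := norm_sum_le _ _
    _ ≤ ∑ p ∈ S, (K ^ 2 * m * L ^ 2) * |π p.1 p.2| := by
        refine Finset.sum_le_sum fun p _ => ?_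
        rw [norm_mul, Complex.norm_real, Real.norm_eq_abs]
        rcases eq_or_ne (π p.1 p.2) 0 with h0 | h0
        · simp [h0]
        · refine mul_le_mul_of_nonneg_right ?_ (abs_nonneg _)
          obtain ⟨hr1, hr2⟩ := hrange p.1 p.2 h0
          have ht : |tt p| ≤ K * L :=
            (aux_cs k _).trans (mul_le_mul_of_nonneg_left hr1 hK0)
          have hsb : |s p.1| ≤ K * (L * ((m : ℝ) - 1)) :=
            (aux_cs k _).trans (mul_le_mul_of_nonneg_left hr2 hK0)
          have hgsplit : g p = Complex.exp (Complex.I * (s p.1 : ℝ)) *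
              (Complex.exp (Complex.I * (tt p : ℝ)) - 1 - Complex.I * (tt p : ℝ)) +
              (Complex.exp (Complex.I * (s p.1 : ℝ)) - 1) * (Complex.I * (tt p : ℝ)) := by
            rw [hg]; ring
          have habs : ‖g p‖ ≤ tt p ^ 2 / 2 + |s p.1| * |tt p| := by
            rw [hgsplit]
            refine (norm_add_le _ _).trans ?_
            rw [norm_mul, norm_mul]
            have e1 : ‖Complex.exp (Complex.I * (s p.1 : ℝ))‖ = 1 := by
              rw [mul_comm]; exact Complex.norm_exp_ofReal_mul_I _
            have e2 : ‖Complex.I * ((tt p : ℝ) : ℂ)‖ = |tt p| := by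
              rw [norm_mul, Complex.norm_I, one_mul, Complex.norm_real, Real.norm_eq_abs]
            rw [e1, e2, one_mul]
            gcongr
            · exact aux_exp_taylor (tt p)
            · exact aux_exp_sub_one_le (s p.1)
          refine habs.trans ?_
          have hm1 : (1 : ℝ) ≤ (m : ℝ) := by exact_mod_cast hm
          have hKL : 0 ≤ K * L := mul_nonneg hK0 (by linarith)
          have h1 : |tt p| * |tt p| ≤ (K * L) * (K * L) :=
            mul_self_le_mul_self (abs_nonneg _) ht
          have h2 : |s p.1| * |tt p| ≤ (K * (L * ((m : ℝ) - 1))) * (K * L) :=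
            mul_le_mul hsb ht (abs_nonneg _)
              (mul_nonneg hK0 (mul_nonneg (by linarith) (by linarith)))
          nlinarith [sq_abs (tt p), sq_nonneg (K * L)]
    _ = K ^ 2 * m * L ^ 2 * ∑ p ∈ S, |π p.1 p.2| := by rw [← Finset.mul_sum]
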